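/- arXiv:1503.03715 — 8 statements merged into one kernel-verified Lean document; each statement's English description precedes it below -/
import Mathlib

section
/- Feedback refinement relations compose: if Q is a feedback refinement relation from S₁ to S₂ and R is a feedback refinement relation from S₂ to S₃, then the composition R ∘ Q (defined by (x₁,x₃) ∈ R∘Q iff there exists x₂ with (x₁,x₂) ∈ Q and (x₂,x₃) ∈ R) is a feedback refinement relation from S₁ to S₃. -/
def IsFRR {X₁ X₂ U : Type*} (U₁ U₂ : Set U)
    (F₁ : X₁ → U → Set X₁) (F₂ : X₂ → U → Set X₂) (Q : X₁ → X₂ → Prop) : Prop :=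
  U₂ ⊆ U₁ ∧ (∀ x₁, ∃ x₂, Q x₁ x₂) ∧
  ∀ x₁ x₂, Q x₁ x₂ → ∀ u ∈ U₂, (F₂ x₂ u).Nonempty →
    (F₁ x₁ u).Nonempty ∧ ∀ x₁' ∈ F₁ x₁ u, ∀ x₂', Q x₁' x₂' → x₂' ∈ F₂ x₂ u

/-- feedback refinement relations compose. -/
theorem frr_trans {X₁ X₂ X₃ U : Type*} (U₁ U₂ U₃ : Set U)
    (F₁ : X₁ → U → Set X₁) (F₂ : X₂ → U → Set X₂) (F₃ : X₃ → U → Set X₃)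
    (Q : X₁ → X₂ → Prop) (R : X₂ → X₃ → Prop)
    (hQ : IsFRR U₁ U₂ F₁ F₂ Q) (hR : IsFRR U₂ U₃ F₂ F₃ R) :
    IsFRR U₁ U₃ F₁ F₃ (fun x₁ x₃ => ∃ x₂, Q x₁ x₂ ∧ R x₂ x₃) := by
  obtain ⟨hU₂₁, hQtot, hQ3⟩ := hQ
  obtain ⟨hU₃₂, hRtot, hR3⟩ := hR
  refine ⟨fun u hu => hU₂₁ (hU₃₂ hu), fun x₁ => ?_, ?_⟩
  · obtain ⟨x₂, hx₂⟩ := hQtot x₁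
    obtain ⟨x₃, hx₃⟩ := hRtot x₂
    exact ⟨x₃, x₂, hx₂, hx₃⟩
  · rintro x₁ x₃ ⟨x₂, hQ12, hR23⟩ u hu h3ne
    obtain ⟨h2ne, hR'⟩ := hR3 x₂ x₃ hR23 u hu h3ne
    obtain ⟨h1ne, hQ'⟩ := hQ3 x₁ x₂ hQ12 u (hU₃₂ hu) h2ne
    refine ⟨h1ne, ?_⟩
    rintro x₁' hx₁' x₃' ⟨x₂', hQ', hR''⟩
    exact hR' x₂' (hQ3 x₁ x₂ hQ12 u (hU₃₂ hu) h2ne |>.2 x₁' hx₁' x₂' hQ') x₃' hR''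
end

section
/- Let X₂ be a cover of X₁ by nonempty subsets, and let S₁, S₂ be simple systems with state sets X₁, X₂ respectively and U₂ ⊆ U₁. Then the membership relation ∈ (i.e., {(x,Ω) : x ∈ Ω}) is a feedback refinement relation from S₁ to S₂ if and only if: (1) whenever x ∈ Ω ∈ X₂, U_{S₂}(Ω) ⊆ U_{S₁}(x); and (2) whenever Ω, Ω' ∈ X₂, u ∈ U_{S₂}(Ω), and Ω' ∩ F₁(Ω,u) ≠ ∅, then Ω' ∈ F₂(Ω,u). Here F₁(Ω,u) = ⋃_{x∈Ω} F₁(x,u). -/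
/-- The membership relation `{(x,Ω) : x ∈ Ω, Ω ∈ C}` is a feedback refinement
relation from the simple system `(F₁, U₁)` on `X` to the simple system `(F₂, U₂)`
whose states are the cells of the cover `C`. -/
def IsFRRmem {X U : Type*} (C : Set (Set X)) (U₁ U₂ : Set U)
    (F₁ : X → U → Set X) (F₂ : Set X → U → Set (Set X)) : Prop :=
  U₂ ⊆ U₁ ∧ (∀ x, ∃ Ω ∈ C, x ∈ Ω) ∧
  ∀ Ω ∈ C, ∀ x ∈ Ω, ∀ u ∈ U₂, (F₂ Ω u).Nonempty →
    (F₁ x u).Nonempty ∧ ∀ x' ∈ F₁ x u, ∀ Ω' ∈ C, x' ∈ Ω' → Ω' ∈ F₂ Ω u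

/-- characterization of the membership relation being a feedback
refinement relation when the abstract states form a cover of the concrete state
alphabet by nonempty subsets. -/
theorem frr_mem_iff {X U : Type*} (C : Set (Set X)) (U₁ U₂ : Set U)
    (hU : U₂ ⊆ U₁)
    (hne : ∀ Ω ∈ C, (Ω : Set X).Nonempty)
    (hcover : ∀ x : X, ∃ Ω ∈ C, x ∈ Ω)
    (F₁ : X → U → Set X) (F₂ : Set X → U → Set (Set X)) :
    IsFRRmem C U₁ U₂ F₁ F₂ ↔
      ((∀ Ω ∈ C, ∀ x ∈ Ω, ∀ u ∈ U₂, (F₂ Ω u).Nonempty → (F₁ x u).Nonempty) ∧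
       (∀ Ω ∈ C, ∀ Ω' ∈ C, ∀ u ∈ U₂, (F₂ Ω u).Nonempty →
         (∃ x ∈ Ω, (Ω' ∩ F₁ x u).Nonempty) → Ω' ∈ F₂ Ω u)) := by
  constructor
  · rintro ⟨-, -, h⟩
    refine ⟨fun Ω hΩ x hx u hu hF2 => (h Ω hΩ x hx u hu hF2).1, ?_⟩
    rintro Ω hΩ Ω' hΩ' u hu hF2 ⟨x, hx, x', hx'Ω', hx'F⟩
    exact (h Ω hΩ x hx u hu hF2).2 x' hx'F Ω' hΩ' hx'Ω'
  · rintro ⟨h1, h2⟩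
    refine ⟨hU, hcover, fun Ω hΩ x hx u hu hF2 => ⟨h1 Ω hΩ x hx u hu hF2, ?_⟩⟩
    intro x' hx' Ω' hΩ' hxΩ'
    exact h2 Ω hΩ Ω' hΩ' u hu hF2 ⟨x, hx, x', hxΩ', hx'⟩
end

section
/- Let S₃ be a simple system with state set X₃ and Q : X₁ ⇉ X₃ a strict relation satisfying: whenever ∅ ≠ Q⁻¹(x) = Q⁻¹(x̃), ∅ ≠ Q⁻¹(x') = Q⁻¹(x̃'), x̃' ∈ F₃(x̃,u), and u ∈ U_{S₃}(x), then x' ∈ F₃(x,u). Define X₂ = {Ω : ∅ ≠ Ω = Q⁻¹(x) for some x ∈ X₃}, the relation R ⊆ X₂ × X₃ by R(Ω) = {x ∈ X₃ : Ω = Q⁻¹(x)}, U₂ = U₃, and F₂(Ω,u) = R⁻¹(F₃(R(Ω),u)). Then for any simple system S₁ with state set X₁ satisfying S₁ ≼_Q S₃: (a) X₂ is a cover of X₁ by nonempty subsets, (b) the membership relation ∈ is a feedback refinement relation from S₁ to S₂ (where S₂ has state set X₂, input set U₂, transition F₂), and (c) R is a feedback refinement relation from S₂ to S₃. -/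
/-- `Q⁻¹(x₃)` for a relation `Q ⊆ X₁ × X₃`. -/
def Qinv {X₁ X₃ : Type*} (Q : X₁ → X₃ → Prop) (x₃ : X₃) : Set X₁ :=
  {x₁ | Q x₁ x₃}

/-- The canonical abstract state alphabet: nonempty sets of the form `Q⁻¹(x₃)`. -/
abbrev canonState {X₁ X₃ : Type*} (Q : X₁ → X₃ → Prop) : Type _ :=
  {Ω : Set X₁ // Ω.Nonempty ∧ ∃ x₃, Ω = Qinv Q x₃}

/-- The canonical relation `R ⊆ X₂ × X₃`. -/
def canonR {X₁ X₃ : Type*} (Q : X₁ → X₃ → Prop) (Ω : canonState Q) (x₃ : X₃) :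
    Prop :=
  (Ω : Set X₁) = Qinv Q x₃

/-- The canonical abstract transition function `F₂(Ω,u) = R⁻¹(F₃(R(Ω),u))`. -/
def canonF {X₁ X₃ U : Type*} (Q : X₁ → X₃ → Prop) (F₃ : X₃ → U → Set X₃)
    (Ω : canonState Q) (u : U) : Set (canonState Q) :=
  {Ω' | ∃ x₃', canonR Q Ω' x₃' ∧ ∃ x₃, canonR Q Ω x₃ ∧ x₃' ∈ F₃ x₃ u}

/-- canonicity.  Given a strict relation `Q` satisfying condition (C)
and any concrete simple system `S₁` with `S₁ ≼_Q S₃`, the canonically constructed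
abstraction `S₂` satisfies:  (a) its state alphabet is a cover of `X₁` by nonempty
subsets, (b) `S₁ ≼_∈ S₂`, and (c) `S₂ ≼_R S₃`. -/
theorem canonical_abstraction {X₁ X₃ U : Type*} (U₁ U₃ : Set U)
    (F₁ : X₁ → U → Set X₁) (F₃ : X₃ → U → Set X₃) (Q : X₁ → X₃ → Prop)
    (hstrict : ∀ x₁, ∃ x₃, Q x₁ x₃)
    (hC : ∀ (x x' x'' x''' : X₃) (u : U),
      (Qinv Q x).Nonempty → Qinv Q x = Qinv Q x'' →
      (Qinv Q x').Nonempty → Qinv Q x' = Qinv Q x''' →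
      x''' ∈ F₃ x'' u → u ∈ U₃ → (F₃ x u).Nonempty → x' ∈ F₃ x u)
    (hFRR : IsFRR U₁ U₃ F₁ F₃ Q) :
    (∀ x₁ : X₁, ∃ Ω : canonState Q, x₁ ∈ (Ω : Set X₁)) ∧
    IsFRR U₁ U₃ F₁ (canonF Q F₃) (fun x₁ Ω => x₁ ∈ (Ω : Set X₁)) ∧
    IsFRR U₃ U₃ (canonF Q F₃) F₃ (canonR Q) := by
  obtain ⟨hU, _, hmain⟩ := hFRR
  have cover : ∀ x₁ : X₁, ∃ Ω : canonState Q, x₁ ∈ (Ω : Set X₁) := by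
    intro x₁
    obtain ⟨x₃, hx₃⟩ := hstrict x₁
    exact ⟨⟨Qinv Q x₃, ⟨x₁, hx₃⟩, x₃, rfl⟩, hx₃⟩
  refine ⟨cover, ⟨hU, cover, ?_⟩, ⟨le_refl _, fun Ω => Ω.2.2, ?_⟩⟩
  · -- S₁ ≼_∈ S₂
    rintro x₁ Ω hmem u hu ⟨Ω', x₃', hR', x₃, hR, hstep⟩
    have hQ : Q x₁ x₃ := by rw [canonR] at hR; rw [hR] at hmem; exact hmem
    obtain ⟨hne, hpost⟩ := hmain x₁ x₃ hQ u hu ⟨x₃', hstep⟩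
    refine ⟨hne, fun x₁' hx₁' Ω'' hmem'' => ?_⟩
    obtain ⟨_, y, hy⟩ := Ω''.2
    have hQ' : Q x₁' y := by have h : x₁' ∈ (Ω'' : Set X₁) := hmem''; rw [hy] at h; exact h
    exact ⟨y, hy, x₃, hR, hpost x₁' hx₁' y hQ'⟩
  · -- S₂ ≼_R S₃
    rintro Ω x₃ hR u hu hne₃
    constructor
    · obtain ⟨x₁, hx₁⟩ := Ω.2.1
      have hQ : Q x₁ x₃ := by rw [canonR] at hR; rw [hR] at hx₁; exact hx₁
      obtain ⟨⟨x₁', hx₁'⟩, hpost⟩ := hmain x₁ x₃ hQ u hu hne₃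
      obtain ⟨z, hz⟩ := hstrict x₁'
      exact ⟨⟨Qinv Q z, ⟨x₁', hz⟩, z, rfl⟩, z, rfl, x₃, hR, hpost x₁' hx₁' z hz⟩
    · rintro Ω' ⟨a, ha, b, hb, hab⟩ x₃' hR'
      exact hC x₃ x₃' b a u (hR ▸ Ω.2.1) (hR ▸ hb) (hR' ▸ Ω'.2.1) (hR' ▸ ha) hab hu hne₃
end

section
/- Let ℓ ∈ ℕ, p₁,...,p_ℓ ∈ ℝⁿ, and let F₁ : ℝⁿ × U₁ ⇉ ℝⁿ satisfy F₁(x + ⟨k,p⟩, u) = F₁(x,u) + ⟨k,p⟩ for all k ∈ ℤˡ, x ∈ ℝⁿ, u ∈ U₁, where ⟨k,p⟩ = Σᵢ kᵢpᵢ. Define π(Ω) = {x + ⟨k,p⟩ : x ∈ Ω, k ∈ ℤˡ} for Ω ⊆ ℝⁿ. Let R be a set of nonempty subsets of ℝⁿ such that X₂ = {π(Ω) : Ω ∈ R} is a cover of ℝⁿ, and let S₂ be a simple system with state set X₂ and input set U₂ ⊆ U₁. Then the membership relation ∈ is a feedback refinement relation from S₁ (the simple system on ℝⁿ with transition F₁)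 to S₂ if and only if: (a) x ∈ Ω ∈ R implies U_{S₂}(π(Ω)) ⊆ U_{S₁}(x), and (b) if Ω, Ω' ∈ R, u ∈ U_{S₂}(π(Ω)), and π(Ω') ∩ F₁(Ω,u) ≠ ∅, then π(Ω') ∈ F₂(π(Ω),u). -/
open scoped BigOperators

/-- The periodization of a set: all translates by integer combinations of the
periods `p i`. -/
def periodize {n ℓ : ℕ} (p : Fin ℓ → (Fin n → ℝ)) (Ω : Set (Fin n → ℝ)) :
    Set (Fin n → ℝ) :=
  {y | ∃ x ∈ Ω, ∃ k : Fin ℓ → ℤ, y = x + ∑ i, (k i : ℝ) • p i}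

lemma mem_periodize_self {n ℓ : ℕ} (p : Fin ℓ → (Fin n → ℝ))
    {Ω : Set (Fin n → ℝ)} {x : Fin n → ℝ} (hx : x ∈ Ω) : x ∈ periodize p Ω := by
  refine ⟨x, hx, 0, ?_⟩
  simp

lemma sum_int_smul_add {n ℓ : ℕ} (p : Fin ℓ → (Fin n → ℝ)) (k k' : Fin ℓ → ℤ) :
    (∑ i, ((k i + k' i : ℤ) : ℝ) • p i) =
      (∑ i, (k i : ℝ) • p i) + ∑ i, (k' i : ℝ) • p i := by
  rw [← Finset.sum_add_distrib]
  refine Finset.sum_congr rfl fun i _ => ?_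
  push_cast
  rw [add_smul]

lemma periodize_shift {n ℓ : ℕ} (p : Fin ℓ → (Fin n → ℝ))
    {Ω : Set (Fin n → ℝ)} {y : Fin n → ℝ} (hy : y ∈ periodize p Ω)
    (k : Fin ℓ → ℤ) : y + ∑ i, (k i : ℝ) • p i ∈ periodize p Ω := by
  obtain ⟨x, hx, k', rfl⟩ := hy
  exact ⟨x, hx, k' + k, by simp only [Pi.add_apply]; rw [sum_int_smul_add p k' k, add_assoc]⟩

lemma periodize_unshift {n ℓ : ℕ} (p : Fin ℓ → (Fin n → ℝ))
    {Ω : Set (Fin n → ℝ)} {y : Fin n → ℝ} (k : Fin ℓ → ℤ)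
    (hy : y + ∑ i, (k i : ℝ) • p i ∈ periodize p Ω) : y ∈ periodize p Ω := by
  have h := periodize_shift p hy (-k)
  have : y + ∑ i, (k i : ℝ) • p i + ∑ i, ((-k) i : ℝ) • p i = y := by
    have := sum_int_smul_add p k (-k)
    simp only [Pi.neg_apply] at this ⊢
    rw [add_assoc, ← this]
    simp
  rwa [this] at h

/-- characterization of the membership relation being a feedback
refinement relation from a sampled system with periodic dynamics to an abstraction
whose cells are periodizations of the cells in `R`. -/
theorem frr_periodic {n ℓ : ℕ} {U : Type*} (p : Fin ℓ → (Fin n → ℝ))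
    (U₁ U₂ : Set U) (hU : U₂ ⊆ U₁)
    (F₁ : (Fin n → ℝ) → U → Set (Fin n → ℝ))
    (hper : ∀ (k : Fin ℓ → ℤ) (x : Fin n → ℝ) (u : U),
      F₁ (x + ∑ i, (k i : ℝ) • p i) u =
        (fun y => y + ∑ i, (k i : ℝ) • p i) '' F₁ x u)
    (R : Set (Set (Fin n → ℝ))) (hRne : ∀ Ω ∈ R, (Ω : Set (Fin n → ℝ)).Nonempty)
    (hcover : ∀ x : Fin n → ℝ, ∃ Ω ∈ R, x ∈ periodize p Ω)
    (F₂ : Set (Fin n → ℝ) → U → Set (Set (Fin n → ℝ))) :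
    IsFRRmem ((periodize p) '' R) U₁ U₂ F₁ F₂ ↔
      ((∀ Ω ∈ R, ∀ x ∈ Ω, ∀ u ∈ U₂,
          (F₂ (periodize p Ω) u).Nonempty → (F₁ x u).Nonempty) ∧
       (∀ Ω ∈ R, ∀ Ω' ∈ R, ∀ u ∈ U₂, (F₂ (periodize p Ω) u).Nonempty →
          (∃ x ∈ Ω, (periodize p Ω' ∩ F₁ x u).Nonempty) →
          periodize p Ω' ∈ F₂ (periodize p Ω) u)) := by
  constructor
  · rintro ⟨-, -, h⟩
    constructor
    · intro Ω hΩ x hx u hu hne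
      exact (h _ ⟨Ω, hΩ, rfl⟩ x (mem_periodize_self p hx) u hu hne).1
    · rintro Ω hΩ Ω' hΩ' u hu hne ⟨x, hx, x', hx'Ω', hx'F⟩
      exact (h _ ⟨Ω, hΩ, rfl⟩ x (mem_periodize_self p hx) u hu hne).2 x' hx'F _
        ⟨Ω', hΩ', rfl⟩ hx'Ω'
  · rintro ⟨h1, h2⟩
    refine ⟨hU, fun x => ?_, ?_⟩
    · obtain ⟨Ω, hΩ, hx⟩ := hcover x
      exact ⟨periodize p Ω, ⟨Ω, hΩ, rfl⟩, hx⟩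
    · rintro _ ⟨Ω, hΩ, rfl⟩ x hx u hu hne
      obtain ⟨x₀, hx₀, k, rfl⟩ := hx
      have hF : F₁ (x₀ + ∑ i, (k i : ℝ) • p i) u =
          (fun y => y + ∑ i, (k i : ℝ) • p i) '' F₁ x₀ u := hper k x₀ u
      constructor
      · obtain ⟨y, hy⟩ := h1 Ω hΩ x₀ hx₀ u hu hne
        rw [hF]
        exact ⟨_, ⟨y, hy, rfl⟩⟩
      · rintro x' hx' _ ⟨Ω', hΩ', rfl⟩ hx'Ω'
        rw [hF] at hx'
        obtain ⟨y, hy, rfl⟩ := hx'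
        have hyΩ' : y ∈ periodize p Ω' := periodize_unshift p k hx'Ω'
        exact h2 Ω hΩ Ω' hΩ' u hu hne ⟨x₀, hx₀, y, hyΩ', hy⟩
end

section
/- Component-wise comparison lemma for perturbed solutions: Let τ > 0, A ⊆ ℝⁿ, and f : ℝⁿ → ℝⁿ continuous. Let ξ₁, ξ₂ : [0,τ] → A be absolutely continuous with |ξᵢ'(t) − f(ξᵢ(t))| ≤ wᵢ(t) (component-wise) for a.e. t ∈ [0,τ], where w₁, w₂ : [0,τ] → ℝ₊ⁿ are integrable. Let L ∈ ℝⁿˣⁿ with L_{i,j} ≥ 0 for i ≠ j, and suppose for all x, y ∈ A and each i: xᵢ ≥ yᵢ implies fᵢ(x) − fᵢ(y) ≤ Σⱼ L_{i,j}|xⱼ − yⱼ|. Let ρ : [0,τ] → ℝ₊ⁿ be absolutely continuous with ρ'(t) = Lρ(t) + w₁(t) + w₂(t) for a.e. t. If |ξ₁(0) − ξ₂(0)| ≤ ρ(0) component-wise, then |ξ₁(t) − ξ₂(t)| ≤ ρ(t) component-wise for every t ∈ [0,τ]. -/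
open MeasureTheory Set

private lemma compII {n : ℕ} {F : ℝ → Fin n → ℝ} {a b : ℝ}
    (hF : IntervalIntegrable F volume a b) (i : Fin n) :
    IntervalIntegrable (fun s => F s i) volume a b :=
  ⟨(ContinuousLinearMap.proj (R := ℝ) (φ := fun _ : Fin n => ℝ) i).integrable_comp hF.1,
    (ContinuousLinearMap.proj (R := ℝ) (φ := fun _ : Fin n => ℝ) i).integrable_comp hF.2⟩

private lemma compInt {n : ℕ} {F : ℝ → Fin n → ℝ} {a b : ℝ}
    (hF : IntervalIntegrable F volume a b) (i : Fin n) :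
    (∫ s in a..b, F s) i = ∫ s in a..b, F s i := by
  have := (ContinuousLinearMap.proj (R := ℝ) (φ := fun _ : Fin n => ℝ) i).intervalIntegral_comp_comm hF
  simpa using this.symm

set_option maxHeartbeats 1000000 in
private lemma cross_aux {n : ℕ} {τ : ℝ}
    {A : Set (Fin n → ℝ)} {f : (Fin n → ℝ) → (Fin n → ℝ)}
    {a b ga gb wa wb : ℝ → (Fin n → ℝ)}
    (hmema : ∀ t ∈ Icc (0:ℝ) τ, a t ∈ A) (hmemb : ∀ t ∈ Icc (0:ℝ) τ, b t ∈ A)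
    (hga : IntervalIntegrable ga volume 0 τ) (hgb : IntervalIntegrable gb volume 0 τ)
    (hwa : IntervalIntegrable wa volume 0 τ) (hwb : IntervalIntegrable wb volume 0 τ)
    (hFTCa : ∀ t ∈ Icc (0:ℝ) τ, a t = a 0 + ∫ s in (0:ℝ)..t, ga s)
    (hFTCb : ∀ t ∈ Icc (0:ℝ) τ, b t = b 0 + ∫ s in (0:ℝ)..t, gb s)
    (hperta : ∀ᵐ t ∂volume, t ∈ Icc (0:ℝ) τ → ∀ i, |ga t i - f (a t) i| ≤ wa t i)
    (hpertb : ∀ᵐ t ∂volume, t ∈ Icc (0:ℝ) τ → ∀ i, |gb t i - f (b t) i| ≤ wb t i)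
    {L : Matrix (Fin n) (Fin n) ℝ} (hL : ∀ i j, i ≠ j → 0 ≤ L i j)
    (hquasi : ∀ x ∈ A, ∀ y ∈ A, ∀ i, y i ≤ x i →
      f x i - f y i ≤ ∑ j, L i j * |x j - y j|)
    {ρ : ℝ → (Fin n → ℝ)} (hρcont : ContinuousOn ρ (Icc (0:ℝ) τ))
    (hρFTC : ∀ t ∈ Icc (0:ℝ) τ,
      ρ t = ρ 0 + ∫ s in (0:ℝ)..t, (L.mulVec (ρ s) + wa s + wb s))
    {K : ℝ} (hK0 : 0 ≤ K) (hK : ∀ i, ∑ j, L i j + 1 ≤ K)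
    {ε : ℝ} (hε : 0 < ε) {T : ℝ} {i : Fin n} (hT : T ∈ Ioc (0:ℝ) τ)
    (hbelow : ∀ σ ∈ Icc (0:ℝ) T, ∀ j, |a σ j - b σ j| ≤ ρ σ j + ε * Real.exp (K * σ))
    (heq : a T i - b T i = ρ T i + ε * Real.exp (K * T))
    (hupos : 0 < a T i - b T i) : False := by
  have hτ0 : (0:ℝ) ≤ τ := le_trans hT.1.le hT.2
  have hTcc : T ∈ Icc (0:ℝ) τ := ⟨hT.1.le, hT.2⟩
  have hU : uIcc (0:ℝ) τ = Icc (0:ℝ) τ := uIcc_of_le hτ0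
  -- continuity of a, b on Icc 0 τ
  have hca : ContinuousOn a (Icc (0:ℝ) τ) := by
    have h := intervalIntegral.continuousOn_primitive_interval' hga
      (by rw [hU]; exact ⟨le_rfl, hτ0⟩)
    rw [hU] at h
    exact (continuousOn_const.add h).congr fun t ht => hFTCa t ht
  have hcb : ContinuousOn b (Icc (0:ℝ) τ) := by
    have h := intervalIntegral.continuousOn_primitive_interval' hgb
      (by rw [hU]; exact ⟨le_rfl, hτ0⟩)
    rw [hU] at h
    exact (continuousOn_const.add h).congr fun t ht => hFTCb t ht
  set u : ℝ → ℝ := fun t => a t i - b t i with hu_def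
  have hcu : ContinuousOn u (Icc (0:ℝ) τ) :=
    ((continuous_apply i).comp_continuousOn hca).sub
      ((continuous_apply i).comp_continuousOn hcb)
  have hcexp : Continuous fun t : ℝ => ε * Real.exp (K * t) :=
    continuous_const.mul (Real.continuous_exp.comp (continuous_const.mul continuous_id))
  set q : ℝ → ℝ := fun t => u t - ρ t i - ε * Real.exp (K * t) with hq_def
  have hcq : ContinuousOn q (Icc (0:ℝ) τ) :=
    (hcu.sub ((continuous_apply i).comp_continuousOn hρcont)).sub hcexp.continuousOn
  have hqT : q T = 0 := by simp only [hq_def, hu_def, heq]; ring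
  set ε' : ℝ := ε / (2 * (|L i i| + 1)) with hε'_def
  have hε' : 0 < ε' := by apply div_pos hε; positivity
  -- eventual properties near T
  have hevq : ∀ᶠ σ in nhdsWithin T (Icc (0:ℝ) τ), |q σ| < ε' ∧ 0 < u σ := by
    have h1 : Filter.Tendsto q (nhdsWithin T (Icc (0:ℝ) τ)) (nhds 0) := by
      have := hcq T hTcc; rwa [ContinuousWithinAt, hqT] at this
    have h2 : Filter.Tendsto u (nhdsWithin T (Icc (0:ℝ) τ)) (nhds (u T)) := hcu T hTcc
    have e1 : ∀ᶠ σ in nhdsWithin T (Icc (0:ℝ) τ), q σ < ε' := h1.eventually_lt_const hε'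
    have e2 : ∀ᶠ σ in nhdsWithin T (Icc (0:ℝ) τ), -ε' < q σ := h1.eventually_const_lt (by linarith)
    have e3 : ∀ᶠ σ in nhdsWithin T (Icc (0:ℝ) τ), 0 < u σ := h2.eventually_const_lt hupos
    filter_upwards [e1, e2, e3] with σ p1 p2 p3
    exact ⟨abs_lt.2 ⟨p2, p1⟩, p3⟩
  rw [eventually_nhdsWithin_iff, Metric.eventually_nhds_iff] at hevq
  obtain ⟨δ, hδ, hball⟩ := hevq
  set s : ℝ := max (T - δ/2) (T/2) with hs_def
  have hsT : s < T := max_lt (by linarith) (by linarith [hT.1])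
  have hs0 : 0 < s := lt_of_lt_of_le (by linarith [hT.1]) (le_max_right _ _)
  have hsubT : Icc s T ⊆ Icc (0:ℝ) T := fun σ hσ => ⟨le_trans hs0.le hσ.1, hσ.2⟩
  have hsub : Icc s T ⊆ Icc (0:ℝ) τ := fun σ hσ => ⟨le_trans hs0.le hσ.1, le_trans hσ.2 hT.2⟩
  have hscc : s ∈ Icc (0:ℝ) τ := hsub ⟨le_rfl, hsT.le⟩
  have hprop : ∀ σ ∈ Icc s T, |q σ| < ε' ∧ 0 < u σ := by
    intro σ hσ
    refine hball ?_ (hsub hσ)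
    rw [Real.dist_eq, abs_lt]
    have h1 : T - δ/2 ≤ s := le_max_left _ _
    constructor
    · linarith [hσ.1]
    · linarith [hσ.2]
  -- FTC on [s, T] componentwise
  have hsubu : uIcc s T ⊆ uIcc (0:ℝ) τ := by
    rw [uIcc_of_le hsT.le, hU]; exact hsub
  have key : ∀ (X F : ℝ → Fin n → ℝ), IntervalIntegrable F volume 0 τ →
      (∀ t ∈ Icc (0:ℝ) τ, X t = X 0 + ∫ σ in (0:ℝ)..t, F σ) →
      X T i - X s i = ∫ σ in s..T, F σ i := by
    intro X F hF hX
    have hsubt : ∀ t ∈ Icc (0:ℝ) τ, uIcc (0:ℝ) t ⊆ uIcc (0:ℝ) τ := by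
      intro t ht
      rw [uIcc_of_le ht.1, hU]
      exact Icc_subset_Icc le_rfl ht.2
    have h1 := congrFun (hX T hTcc) i
    have h2 := congrFun (hX s hscc) i
    rw [Pi.add_apply, compInt (hF.mono_set (hsubt T hTcc)) i] at h1
    rw [Pi.add_apply, compInt (hF.mono_set (hsubt s hscc)) i] at h2
    rw [h1, h2]
    have := intervalIntegral.integral_interval_sub_left
      (compII (hF.mono_set (hsubt T hTcc)) i) (compII (hF.mono_set (hsubt s hscc)) i)
    rw [← this]; ring
  -- continuity / integrability of the pieces
  have hmvρ : ContinuousOn (fun σ => L.mulVec (ρ σ)) (Icc (0:ℝ) τ) := by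
    have hc : Continuous fun v : Fin n → ℝ => L.mulVec v := by
      have := LinearMap.continuous_of_finiteDimensional (Matrix.mulVecLin L)
      exact this
    exact hc.comp_continuousOn hρcont
  have hρint : IntervalIntegrable (fun σ => L.mulVec (ρ σ) + wa σ + wb σ) volume 0 τ := by
    refine IntervalIntegrable.add (IntervalIntegrable.add ?_ hwa) hwb
    exact (hmvρ.mono (by rw [hU])).intervalIntegrable
  have i1 : IntervalIntegrable (fun σ => ga σ i) volume s T := (compII hga i).mono_set hsubu
  have i2 : IntervalIntegrable (fun σ => gb σ i) volume s T := (compII hgb i).mono_set hsubu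
  have i3 : IntervalIntegrable (fun σ => L.mulVec (ρ σ) i + wa σ i + wb σ i) volume s T := by
    refine IntervalIntegrable.add (IntervalIntegrable.add ?_ ((compII hwa i).mono_set hsubu))
      ((compII hwb i).mono_set hsubu)
    exact (((continuous_apply i).comp_continuousOn hmvρ).mono
      (hsubu.trans (by rw [hU]))).intervalIntegrable
  have i4 : IntervalIntegrable (fun σ => ε * (Real.exp (K * σ) * K)) volume s T :=
    (continuous_const.mul ((Real.continuous_exp.comp (continuous_const.mul continuous_id)).mul
      continuous_const)).intervalIntegrable _ _
  -- FTC identities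
  have hgaTs : a T i - a s i = ∫ σ in s..T, ga σ i := key a ga hga hFTCa
  have hgbTs : b T i - b s i = ∫ σ in s..T, gb σ i := key b gb hgb hFTCb
  have hρTs : ρ T i - ρ s i = ∫ σ in s..T, (L.mulVec (ρ σ) i + wa σ i + wb σ i) :=
    key ρ _ hρint hρFTC
  have hexpTs : ε * Real.exp (K * T) - ε * Real.exp (K * s)
      = ∫ σ in s..T, ε * (Real.exp (K * σ) * K) := by
    refine (intervalIntegral.integral_eq_sub_of_hasDerivAt
      (f := fun t => ε * Real.exp (K * t)) (fun σ _ => ?_) i4).symm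
    have h := (((hasDerivAt_id σ).const_mul K).exp).const_mul ε
    simpa using h
  have hqTs : q T - q s = ∫ σ in s..T,
      (ga σ i - gb σ i - (L.mulVec (ρ σ) i + wa σ i + wb σ i) - ε * (Real.exp (K * σ) * K)) := by
    rw [intervalIntegral.integral_sub ((i1.sub i2).sub i3) i4,
      intervalIntegral.integral_sub (i1.sub i2) i3,
      intervalIntegral.integral_sub i1 i2,
      ← hgaTs, ← hgbTs, ← hρTs, ← hexpTs]
    simp only [hq_def, hu_def]
    ring
  -- a.e. pointwise bound on the integrand
  have hae : ∀ᵐ σ ∂volume, σ ∈ Icc s T →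
      (ga σ i - gb σ i - (L.mulVec (ρ σ) i + wa σ i + wb σ i) - ε * (Real.exp (K * σ) * K))
        ≤ -(ε/2) := by
    filter_upwards [hperta, hpertb] with σ hpa hpb hσ
    have hστ : σ ∈ Icc (0:ℝ) τ := hsub hσ
    have hpa' := hpa hστ i
    have hpb' := hpb hστ i
    have h1 : ga σ i - gb σ i ≤ f (a σ) i - f (b σ) i + wa σ i + wb σ i := by
      have ha := abs_le.1 hpa'
      have hb := abs_le.1 hpb'
      linarith [ha.2, hb.1]
    have husd := (hprop σ hσ).2
    have h2 : f (a σ) i - f (b σ) i ≤ ∑ j, L i j * |a σ j - b σ j| := by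
      refine hquasi _ (hmema σ hστ) _ (hmemb σ hστ) i ?_
      simp only [hu_def] at husd; linarith
    have h3 : ∑ j, L i j * |a σ j - b σ j|
        ≤ (∑ j, L i j * (ρ σ j + ε * Real.exp (K * σ))) + |L i i| * ε' := by
      have hsplit : ∀ j, L i j * |a σ j - b σ j|
          ≤ L i j * (ρ σ j + ε * Real.exp (K * σ)) + (if j = i then |L i i| * ε' else 0) := by
        intro j
        by_cases hj : j = i
        · subst hj
          rw [if_pos rfl]
          have hq' := (hprop σ hσ).1
          have habs : |a σ j - b σ j| = a σ j - b σ j := abs_of_pos husd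
          rw [habs]
          have hrw : a σ j - b σ j = (ρ σ j + ε * Real.exp (K * σ)) + q σ := by
            simp only [hq_def, hu_def]; ring
          rw [hrw, mul_add]
          have hb2 : L j j * q σ ≤ |L j j| * ε' :=
            calc L j j * q σ ≤ |L j j * q σ| := le_abs_self _
            _ = |L j j| * |q σ| := abs_mul _ _
            _ ≤ |L j j| * ε' := mul_le_mul_of_nonneg_left hq'.le (abs_nonneg _)
          linarith
        · simp only [if_neg hj, add_zero]
          exact mul_le_mul_of_nonneg_left (hbelow σ (hsubT hσ) j)
            (hL i j fun h => hj h.symm)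
      calc ∑ j, L i j * |a σ j - b σ j|
          ≤ ∑ j, (L i j * (ρ σ j + ε * Real.exp (K * σ)) + if j = i then |L i i| * ε' else 0) :=
            Finset.sum_le_sum fun j _ => hsplit j
        _ = (∑ j, L i j * (ρ σ j + ε * Real.exp (K * σ))) + |L i i| * ε' := by
            rw [Finset.sum_add_distrib, Finset.sum_ite_eq' Finset.univ i
              (fun _ => |L i i| * ε')]
            simp
    have h4 : ∑ j, L i j * (ρ σ j + ε * Real.exp (K * σ))
        = L.mulVec (ρ σ) i + (∑ j, L i j) * (ε * Real.exp (K * σ)) := by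
      simp only [mul_add, Finset.sum_add_distrib, ← Finset.sum_mul,
        Matrix.mulVec, dotProduct]
    have h5 : |L i i| * ε' ≤ ε / 2 := by
      rw [hε'_def, mul_comm, div_mul_eq_mul_div, div_le_div_iff₀ (by positivity) (by norm_num)]
      nlinarith [abs_nonneg (L i i), hε.le]
    have hexp1 : 1 ≤ Real.exp (K * σ) :=
      Real.one_le_exp (mul_nonneg hK0 (le_trans hs0.le hσ.1))
    have hee : ε ≤ ε * Real.exp (K * σ) := by nlinarith
    rw [h4] at h3
    have hAB : ga σ i - gb σ i - (L.mulVec (ρ σ) i + wa σ i + wb σ i)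
        ≤ (∑ j, L i j) * (ε * Real.exp (K * σ)) + ε/2 := by linarith
    have hEpos : (0:ℝ) < ε * Real.exp (K * σ) := by positivity
    have hfinal : (∑ j, L i j) * (ε * Real.exp (K * σ)) - ε * (Real.exp (K * σ) * K) ≤ -ε := by
      have hrw2 : (∑ j, L i j) * (ε * Real.exp (K * σ)) - ε * (Real.exp (K * σ) * K)
          = ((∑ j, L i j) + 1 - K) * (ε * Real.exp (K * σ)) - (ε * Real.exp (K * σ)) := by ring
      rw [hrw2]
      have h2' : ((∑ j, L i j) + 1 - K) * (ε * Real.exp (K * σ)) ≤ 0 :=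
        mul_nonpos_of_nonpos_of_nonneg (by linarith [hK i]) hEpos.le
      linarith [hee]
    linarith [hAB, hfinal]
  -- integral comparison and contradiction
  have hIh : IntervalIntegrable (fun σ =>
      ga σ i - gb σ i - (L.mulVec (ρ σ) i + wa σ i + wb σ i) - ε * (Real.exp (K * σ) * K))
      volume s T := ((i1.sub i2).sub i3).sub i4
  have hbound : (∫ σ in s..T,
      (ga σ i - gb σ i - (L.mulVec (ρ σ) i + wa σ i + wb σ i) - ε * (Real.exp (K * σ) * K)))
      ≤ ∫ _σ in s..T, (-(ε/2)) :=
    intervalIntegral.integral_mono_ae_restrict hsT.le hIh (intervalIntegrable_const)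
      ((ae_restrict_iff' measurableSet_Icc).2 hae)
  rw [intervalIntegral.integral_const, smul_eq_mul] at hbound
  have hq_s : q s ≤ 0 := by
    have h := hbelow s ⟨hs0.le, hsT.le⟩ i
    have h2 : u s ≤ ρ s i + ε * Real.exp (K * s) := le_trans (le_abs_self _) h
    simp only [hq_def]; linarith
  have hfin : q T - q s ≤ (T - s) * (-(ε/2)) := by rw [hqTs]; exact hbound
  nlinarith [hqT, hq_s, hfin, hsT, hε]
/-- component-wise comparison lemma for perturbed solutions.
Absolute continuity of `ξᵢ` and `ρ` is expressed through the fundamental theorem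
of calculus: `ξᵢ t = ξᵢ 0 + ∫₀ᵗ gᵢ` with `gᵢ` integrable (a.e. derivative), and
`ρ` solves the linear comparison ODE `ρ' = Lρ + w₁ + w₂` in integral form. -/
theorem componentwise_comparison {n : ℕ} (τ : ℝ) (hτ : 0 < τ)
    (A : Set (Fin n → ℝ)) (f : (Fin n → ℝ) → (Fin n → ℝ)) (hf : Continuous f)
    (ξ₁ ξ₂ g₁ g₂ w₁ w₂ : ℝ → (Fin n → ℝ))
    (hmem₁ : ∀ t ∈ Icc (0:ℝ) τ, ξ₁ t ∈ A) (hmem₂ : ∀ t ∈ Icc (0:ℝ) τ, ξ₂ t ∈ A)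
    (hg₁ : IntervalIntegrable g₁ volume 0 τ)
    (hg₂ : IntervalIntegrable g₂ volume 0 τ)
    (hw₁ : IntervalIntegrable w₁ volume 0 τ)
    (hw₂ : IntervalIntegrable w₂ volume 0 τ)
    (hwpos : ∀ t ∈ Icc (0:ℝ) τ, ∀ i, 0 ≤ w₁ t i ∧ 0 ≤ w₂ t i)
    (hFTC₁ : ∀ t ∈ Icc (0:ℝ) τ, ξ₁ t = ξ₁ 0 + ∫ s in (0:ℝ)..t, g₁ s)
    (hFTC₂ : ∀ t ∈ Icc (0:ℝ) τ, ξ₂ t = ξ₂ 0 + ∫ s in (0:ℝ)..t, g₂ s)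
    (hpert₁ : ∀ᵐ t ∂volume, t ∈ Icc (0:ℝ) τ → ∀ i, |g₁ t i - f (ξ₁ t) i| ≤ w₁ t i)
    (hpert₂ : ∀ᵐ t ∂volume, t ∈ Icc (0:ℝ) τ → ∀ i, |g₂ t i - f (ξ₂ t) i| ≤ w₂ t i)
    (L : Matrix (Fin n) (Fin n) ℝ) (hL : ∀ i j, i ≠ j → 0 ≤ L i j)
    (hquasi : ∀ x ∈ A, ∀ y ∈ A, ∀ i, y i ≤ x i →
      f x i - f y i ≤ ∑ j, L i j * |x j - y j|)
    (ρ : ℝ → (Fin n → ℝ)) (hρcont : ContinuousOn ρ (Icc (0:ℝ) τ))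
    (hρpos : ∀ t ∈ Icc (0:ℝ) τ, ∀ i, 0 ≤ ρ t i)
    (hρFTC : ∀ t ∈ Icc (0:ℝ) τ,
      ρ t = ρ 0 + ∫ s in (0:ℝ)..t, (L.mulVec (ρ s) + w₁ s + w₂ s))
    (h0 : ∀ i, |ξ₁ 0 i - ξ₂ 0 i| ≤ ρ 0 i) :
    ∀ t ∈ Icc (0:ℝ) τ, ∀ i, |ξ₁ t i - ξ₂ t i| ≤ ρ t i := by
  intro t ht i
  have hτ0 : (0:ℝ) ≤ τ := hτ.le
  have hU : uIcc (0:ℝ) τ = Icc (0:ℝ) τ := uIcc_of_le hτ0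
  have hc₁ : ContinuousOn ξ₁ (Icc (0:ℝ) τ) := by
    have h := intervalIntegral.continuousOn_primitive_interval' hg₁
      (by rw [hU]; exact ⟨le_rfl, hτ0⟩)
    rw [hU] at h
    exact (continuousOn_const.add h).congr fun s hs => hFTC₁ s hs
  have hc₂ : ContinuousOn ξ₂ (Icc (0:ℝ) τ) := by
    have h := intervalIntegral.continuousOn_primitive_interval' hg₂
      (by rw [hU]; exact ⟨le_rfl, hτ0⟩)
    rw [hU] at h
    exact (continuousOn_const.add h).congr fun s hs => hFTC₂ s hs
  set K : ℝ := (∑ p : Fin n, ∑ j, |L p j|) + 1 with hKdef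
  have hK0 : (0:ℝ) ≤ K := by positivity
  have hK : ∀ p, ∑ j, L p j + 1 ≤ K := by
    intro p
    have h1 : ∑ j, L p j ≤ ∑ j, |L p j| := Finset.sum_le_sum fun j _ => le_abs_self _
    have h2 : ∑ j, |L p j| ≤ ∑ p' : Fin n, ∑ j, |L p' j| :=
      Finset.single_le_sum (f := fun p' => ∑ j, |L p' j|)
        (fun p' _ => Finset.sum_nonneg fun j _ => abs_nonneg _) (Finset.mem_univ p)
    rw [hKdef]; linarith
  have claim : ∀ ε : ℝ, 0 < ε → ∀ σ ∈ Icc (0:ℝ) τ, ∀ j,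
      |ξ₁ σ j - ξ₂ σ j| < ρ σ j + ε * Real.exp (K * σ) := by
    intro ε hε
    by_contra hcon
    push_neg at hcon
    obtain ⟨σ₀, hσ₀, j₀, hj₀⟩ := hcon
    set S : Set ℝ := ⋃ j : Fin n, (Icc (0:ℝ) τ ∩
      (fun σ => ρ σ j + ε * Real.exp (K * σ) - |ξ₁ σ j - ξ₂ σ j|) ⁻¹' Iic 0) with hSdef
    have hGcont : ∀ j : Fin n, ContinuousOn
        (fun σ => ρ σ j + ε * Real.exp (K * σ) - |ξ₁ σ j - ξ₂ σ j|) (Icc (0:ℝ) τ) := by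
      intro j
      exact (((continuous_apply j).comp_continuousOn hρcont).add
        (continuous_const.mul
          (Real.continuous_exp.comp (continuous_const.mul continuous_id))).continuousOn).sub
        (((continuous_apply j).comp_continuousOn hc₁).sub
          ((continuous_apply j).comp_continuousOn hc₂)).abs
    have hSclosed : IsClosed S := isClosed_iUnion_of_finite fun j =>
      (hGcont j).preimage_isClosed_of_isClosed isClosed_Icc isClosed_Iic
    have hSne : S.Nonempty :=
      ⟨σ₀, mem_iUnion.2 ⟨j₀, hσ₀, by simp only [mem_preimage, mem_Iic]; linarith⟩⟩
    have hSsub : S ⊆ Icc (0:ℝ) τ := by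
      intro σ hσ
      obtain ⟨j, hj⟩ := mem_iUnion.1 hσ
      exact hj.1
    have hSbdd : BddBelow S := ⟨0, fun σ hσ => (hSsub hσ).1⟩
    set T := sInf S with hTdef
    have hTS : T ∈ S := hSclosed.csInf_mem hSne hSbdd
    have hTcc : T ∈ Icc (0:ℝ) τ := hSsub hTS
    obtain ⟨i₀, hi₀mem⟩ := mem_iUnion.1 hTS
    have hi₀ : ρ T i₀ + ε * Real.exp (K * T) ≤ |ξ₁ T i₀ - ξ₂ T i₀| := by
      have h := hi₀mem.2
      simp only [mem_preimage, mem_Iic] at h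
      linarith
    have hT0 : 0 < T := by
      rcases lt_or_eq_of_le hTcc.1 with h | h
      · exact h
      · exfalso
        rw [← h] at hi₀
        rw [mul_zero, Real.exp_zero, mul_one] at hi₀
        linarith [h0 i₀]
    have hstrict : ∀ σ, σ ∈ Icc (0:ℝ) τ → σ < T → ∀ j,
        |ξ₁ σ j - ξ₂ σ j| < ρ σ j + ε * Real.exp (K * σ) := by
      intro σ hσ hσT j
      by_contra hcon2
      push_neg at hcon2
      have hmem : σ ∈ S :=
        mem_iUnion.2 ⟨j, hσ, by simp only [mem_preimage, mem_Iic]; linarith⟩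
      exact absurd (csInf_le hSbdd hmem) (not_le.2 hσT)
    have hbelow : ∀ σ ∈ Icc (0:ℝ) T, ∀ j,
        |ξ₁ σ j - ξ₂ σ j| ≤ ρ σ j + ε * Real.exp (K * σ) := by
      intro σ hσ j
      rcases lt_or_eq_of_le hσ.2 with h | h
      · exact (hstrict σ ⟨hσ.1, le_trans hσ.2 hTcc.2⟩ h j).le
      · have hclos : T ∈ closure (Ico (0:ℝ) T) := by
          rw [closure_Ico (ne_of_lt hT0)]
          exact ⟨hT0.le, le_rfl⟩
        have hne : (nhdsWithin T (Ico (0:ℝ) T)).NeBot :=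
          mem_closure_iff_nhdsWithin_neBot.1 hclos
        have htend : Filter.Tendsto
            (fun σ' => ρ σ' j + ε * Real.exp (K * σ') - |ξ₁ σ' j - ξ₂ σ' j|)
            (nhdsWithin T (Ico (0:ℝ) T))
            (nhds (ρ T j + ε * Real.exp (K * T) - |ξ₁ T j - ξ₂ T j|)) :=
          ((hGcont j) T hTcc).mono (fun x hx => ⟨hx.1, le_trans hx.2.le hTcc.2⟩)
        have hge : 0 ≤ ρ T j + ε * Real.exp (K * T) - |ξ₁ T j - ξ₂ T j| := by
          refine ge_of_tendsto htend ?_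
          filter_upwards [self_mem_nhdsWithin] with σ' hσ'
          have := hstrict σ' ⟨hσ'.1, le_trans hσ'.2.le hTcc.2⟩ hσ'.2 j
          linarith
        rw [h]
        linarith
    have heqT : |ξ₁ T i₀ - ξ₂ T i₀| = ρ T i₀ + ε * Real.exp (K * T) :=
      le_antisymm (hbelow T ⟨hT0.le, le_rfl⟩ i₀) hi₀
    have hpos : 0 < ρ T i₀ + ε * Real.exp (K * T) := by
      have := hρpos T hTcc i₀
      nlinarith [Real.exp_pos (K * T), hε]
    have hTIoc : T ∈ Ioc (0:ℝ) τ := ⟨hT0, hTcc.2⟩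
    rcases abs_cases (ξ₁ T i₀ - ξ₂ T i₀) with ⟨habs, -⟩ | ⟨habs, -⟩
    · exact cross_aux (T := T) (i := i₀) hmem₁ hmem₂ hg₁ hg₂ hw₁ hw₂ hFTC₁ hFTC₂ hpert₁ hpert₂ hL hquasi
        hρcont hρFTC hK0 hK hε hTIoc hbelow (by rw [← habs]; exact heqT) (by
          rw [← habs, heqT]; exact hpos)
    · have hρFTC' : ∀ t' ∈ Icc (0:ℝ) τ,
          ρ t' = ρ 0 + ∫ s in (0:ℝ)..t', (L.mulVec (ρ s) + w₂ s + w₁ s) := by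
        intro t' ht'
        rw [hρFTC t' ht']
        congr 1
        apply intervalIntegral.integral_congr
        intro σ _
        show L.mulVec (ρ σ) + w₁ σ + w₂ σ = L.mulVec (ρ σ) + w₂ σ + w₁ σ
        rw [add_right_comm]
      have hbelow' : ∀ σ ∈ Icc (0:ℝ) T, ∀ j,
          |ξ₂ σ j - ξ₁ σ j| ≤ ρ σ j + ε * Real.exp (K * σ) := by
        intro σ hσ j
        rw [abs_sub_comm]
        exact hbelow σ hσ j
      refine cross_aux (T := T) (i := i₀) hmem₂ hmem₁ hg₂ hg₁ hw₂ hw₁ hFTC₂ hFTC₁ hpert₂ hpert₁ hL hquasi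
        hρcont hρFTC' hK0 hK hε hTIoc hbelow' ?_ ?_
      · have : -(ξ₁ T i₀ - ξ₂ T i₀) = ρ T i₀ + ε * Real.exp (K * T) := by
          rw [← habs]; exact heqT
        linarith
      · have : -(ξ₁ T i₀ - ξ₂ T i₀) = ρ T i₀ + ε * Real.exp (K * T) := by
          rw [← habs]; exact heqT
        linarith
  refine le_of_forall_pos_le_add ?_
  intro ε hε
  have h := (claim (ε / Real.exp (K * t)) (by positivity) t ht i).le
  rwa [div_mul_cancel₀ _ (Real.exp_pos (K * t)).ne'] at h
end

section
/- Abstraction soundness: Let S₁ be the sampled system on X₁ = ℝⁿ with input set U₁ and transition F₁(x₀,u) = {ξ(τ) : ξ is a solution of ξ' ∈ f(ξ,u) + W on [0,τ] with ξ(0) = x₀}. Let X₂ be a cover of ℝⁿ by nonempty closed hyper-intervals, X̄₂ ⊆ X₂ a subset of compact cells, U₂ ⊆ U₁, and let β : ℝ₊ⁿ × U₂ → ℝ₊ⁿ be a growth bound on K = ⋃_{x₂ ∈ X̄₂} x₂ and U₂, i.e.: β(r,u) ≥ β(r',u) whenever r ≥ r', the unperturbed flow φ(τ,·,u) is defined on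 K for u ∈ U₂, and for every solution ξ of the perturbed inclusion on [0,τ] with input u ∈ U₂ and ξ(0), p ∈ K, |ξ(τ) − φ(τ,p,u)| ≤ β(|ξ(0) − p|, u). Suppose S₂ is a simple system with state set X₂, input set U₂ and transition F₂ satisfying: (i) for x₂ = [a,b] ∈ X̄₂ with center c = (a+b)/2 and radius r = (b−a)/2, r' = β(r,u): if (φ(τ,c,u) + [−r',r']) ∩ x₂' ≠ ∅ then x₂' ∈ F₂(x₂,u); and (ii) F₂(x₂,u) = ∅ for x₂ ∈ X₂ \ X̄₂. Then the membership relation ∈ is a feedback refinement relation from S₁ to S₂. -/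
open MeasureTheory Set

/-- `ξ` is a solution on `[0,τ]` of `x' ∈ f(x,u) + [-w,w]` with constant input
`u` (absolute continuity is expressed via the fundamental theorem of calculus). -/
def IsSol {n : ℕ} {U : Type*} (f : (Fin n → ℝ) → U → (Fin n → ℝ))
    (w : Fin n → ℝ) (u : U) (τ : ℝ) (ξ : ℝ → (Fin n → ℝ)) : Prop :=
  ∃ g : ℝ → (Fin n → ℝ), IntervalIntegrable g volume 0 τ ∧
    (∀ t ∈ Icc (0:ℝ) τ, ξ t = ξ 0 + ∫ s in (0:ℝ)..t, g s) ∧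
    (∀ᵐ t ∂volume, t ∈ Icc (0:ℝ) τ → ∀ i, |g t i - f (ξ t) u i| ≤ w i)

/-- The transition function of the sampled system associated with
`x' ∈ f(x,u) + [-w,w]` and sampling time `τ`. -/
def sampledF {n : ℕ} {U : Type*} (f : (Fin n → ℝ) → U → (Fin n → ℝ))
    (w : Fin n → ℝ) (τ : ℝ) (x₀ : Fin n → ℝ) (u : U) : Set (Fin n → ℝ) :=
  {x | ∃ ξ, IsSol f w u τ ξ ∧ ξ 0 = x₀ ∧ ξ τ = x}

/-- abstraction soundness.  Let `S₁` be the sampled system of the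
perturbed control system, `C` a cover of `ℝⁿ` by nonempty closed hyper-intervals
with compact cells `Cbar ⊆ C`, `φτ` the time-`τ` map of the unperturbed flow
(defined on `K = ⋃ Cbar`), `β` a growth bound, and `F₂` a transition function
satisfying the two construction conditions.  Then `∈` is a feedback refinement
relation from `S₁` to `S₂`. -/
theorem abstraction_sound {n : ℕ} {U : Type*}
    (U₁ U₂ : Set U) (hU : U₂ ⊆ U₁)
    (f : (Fin n → ℝ) → U → (Fin n → ℝ))
    (hlip : ∀ u : U, LocallyLipschitz (fun x => f x u))
    (w : Fin n → ℝ) (hw : ∀ i, 0 ≤ w i)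
    (τ : ℝ) (hτ : 0 < τ)
    (C Cbar : Set (Set (Fin n → ℝ))) (hsub : Cbar ⊆ C)
    (hcells : ∀ Ω ∈ C, (Ω : Set (Fin n → ℝ)).Nonempty ∧ ∃ a b : Fin n → EReal,
      Ω = {x | ∀ i, a i ≤ (x i : EReal) ∧ (x i : EReal) ≤ b i})
    (hcompact : ∀ Ω ∈ Cbar, ∃ a b : Fin n → ℝ, Ω = Icc a b)
    (hcover : ∀ x : Fin n → ℝ, ∃ Ω ∈ C, x ∈ Ω)
    (φτ : (Fin n → ℝ) → U → (Fin n → ℝ))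
    (hφ : ∀ u ∈ U₂, ∀ p ∈ ⋃₀ Cbar, ∃ η, IsSol f (fun _ => 0) u τ η ∧
      η 0 = p ∧ η τ = φτ p u)
    (β : (Fin n → ℝ) → U → (Fin n → ℝ))
    (hβmono : ∀ u ∈ U₂, ∀ r r' : Fin n → ℝ, (∀ i, r' i ≤ r i) →
      ∀ i, β r' u i ≤ β r u i)
    (hβ : ∀ u ∈ U₂, ∀ ξ, IsSol f w u τ ξ → ξ 0 ∈ ⋃₀ Cbar →
      ∀ p ∈ ⋃₀ Cbar, ∀ i, |ξ τ i - φτ p u i| ≤ β (fun j => |ξ 0 j - p j|) u i)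
    (F₂ : Set (Fin n → ℝ) → U → Set (Set (Fin n → ℝ)))
    (hF₂i : ∀ a b : Fin n → ℝ, Icc a b ∈ Cbar → ∀ u ∈ U₂, ∀ Ω' ∈ C,
      (Icc (fun i => φτ (fun j => (a j + b j) / 2) u i -
              β (fun j => (b j - a j) / 2) u i)
           (fun i => φτ (fun j => (a j + b j) / 2) u i +
              β (fun j => (b j - a j) / 2) u i) ∩ Ω').Nonempty →
      Ω' ∈ F₂ (Icc a b) u)
    (hF₂ii : ∀ Ω ∈ C, Ω ∉ Cbar → ∀ u : U, F₂ Ω u = ∅) :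
    IsFRRmem C U₁ U₂ (sampledF f w τ) F₂ := by
  refine ⟨hU, hcover, ?_⟩
  intro Ω hΩ x hx u hu hne
  have hΩbar : Ω ∈ Cbar := by
    by_contra h
    rw [hF₂ii Ω hΩ h u] at hne
    exact Set.not_nonempty_empty hne
  obtain ⟨a, b, rfl⟩ := hcompact Ω hΩbar
  have hK : x ∈ ⋃₀ Cbar := ⟨_, hΩbar, hx⟩
  obtain ⟨η, hη, hη0, hητ⟩ := hφ u hu x hK
  have hηsol : IsSol f w u τ η := by
    obtain ⟨g, hg, hfund, hae⟩ := hη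
    exact ⟨g, hg, hfund, hae.mono fun t ht hmem i => (ht hmem i).trans (hw i)⟩
  refine ⟨⟨φτ x u, η, hηsol, hη0, hητ⟩, ?_⟩
  intro x' hx' Ω' hΩ' hx'Ω'
  obtain ⟨ξ, hξ, hξ0, hξτ⟩ := hx'
  have hab : ∀ i, a i ≤ b i := fun i => (hx.1 i).trans (hx.2 i)
  have hc : (fun j => (a j + b j) / 2) ∈ Icc a b :=
    ⟨fun i => by dsimp; linarith [hab i], fun i => by dsimp; linarith [hab i]⟩
  have hcK : (fun j => (a j + b j) / 2) ∈ ⋃₀ Cbar := ⟨_, hΩbar, hc⟩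
  have hξ0K : ξ 0 ∈ ⋃₀ Cbar := by rw [hξ0]; exact hK
  have hβbd := hβ u hu ξ hξ hξ0K _ hcK
  have hmono := hβmono u hu (fun j => (b j - a j) / 2)
      (fun j => |ξ 0 j - (a j + b j) / 2|) ?_
  · apply hF₂i a b hΩbar u hu Ω' hΩ'
    refine ⟨x', ⟨fun i => ?_, fun i => ?_⟩, hx'Ω'⟩
    · have h1 := (abs_le.mp (hβbd i)).1
      have h2 := hmono i
      dsimp at *
      linarith [hξτ ▸ h1]
    · have h1 := (abs_le.mp (hβbd i)).2
      have h2 := hmono i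
      dsimp at *
      linarith [hξτ ▸ h1]
  · intro i
    rw [abs_le, hξ0]
    have h1 := hx.1 i; have h2 := hx.2 i
    constructor <;> linarith
end

section
/- Behavioral inclusion (finite-trajectory core): Let Q be a feedback refinement relation from simple system S₁ to simple system S₂. Let T ∈ ℕ ∪ {∞}, let u : [0;T) → U₂, x₁ : [0;T) → X₁ with x₁(t+1) ∈ F₁(x₁(t),u(t)) for all t+1 < T, and suppose x₂ : [0;T) → X₂ satisfies x₂(t) ∈ Q(x₁(t)) and u(t) ∈ U_{S₂}(x₂(t)) for all t+1 < T. Then: (a) x₂(t+1) ∈ F₂(x₂(t),u(t)) for all t+1 < T; and (b) if T < ∞ and u(T−1) ∈ U_{S₂}(x₂(T−1)), then F₁(x₁(T−1), u(T−1)) ≠ ∅. -/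
/-- behavioral inclusion, finite-trajectory core.  (a) the related
abstract sequence is a trajectory of `S₂`; (b) if `T = n+1` is finite and the input
at the last instant is admissible for `S₂`, then `S₁` does not block there. -/
theorem frr_behavioral_core {X₁ X₂ U : Type*} (U₁ U₂ : Set U)
    (F₁ : X₁ → U → Set X₁) (F₂ : X₂ → U → Set X₂) (Q : X₁ → X₂ → Prop)
    (hQ : IsFRR U₁ U₂ F₁ F₂ Q) (T : ℕ∞)
    (u : ℕ → U) (x₁ : ℕ → X₁) (x₂ : ℕ → X₂)
    (htraj : ∀ t : ℕ, ((t + 1 : ℕ) : ℕ∞) < T → x₁ (t + 1) ∈ F₁ (x₁ t) (u t))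
    (hrel : ∀ t : ℕ, (t : ℕ∞) < T → Q (x₁ t) (x₂ t))
    (hadm : ∀ t : ℕ, ((t + 1 : ℕ) : ℕ∞) < T →
      u t ∈ U₂ ∧ (F₂ (x₂ t) (u t)).Nonempty) :
    (∀ t : ℕ, ((t + 1 : ℕ) : ℕ∞) < T → x₂ (t + 1) ∈ F₂ (x₂ t) (u t)) ∧
    (∀ n : ℕ, T = ((n + 1 : ℕ) : ℕ∞) →
      u n ∈ U₂ → (F₂ (x₂ n) (u n)).Nonempty → (F₁ (x₁ n) (u n)).Nonempty) := by
  obtain ⟨-, -, h3⟩ := hQ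
  constructor
  · intro t ht
    obtain ⟨hu, hne⟩ := hadm t ht
    have hlt : (t : ℕ∞) < T := lt_of_le_of_lt (by exact_mod_cast Nat.le_succ t) ht
    exact (h3 _ _ (hrel t hlt) _ hu hne).2 _ (htraj t ht) _ (hrel (t+1) (by exact_mod_cast ht))
  · intro n hT hu hne
    have hlt : (n : ℕ∞) < T := by
      rw [hT]; exact_mod_cast Nat.lt_succ_self n
    exact (h3 _ _ (hrel n hlt) _ hu hne).1
end

section
/- Necessity of condition (i) of feedback refinement relations via blocking: Let S₁, S₂ be simple systems and Q ⊆ X₁ × X₂ a strict relation. Fix (x₁,x₂) ∈ Q and u ∈ U₂ with F₂(x₂,u) ≠ ∅. Suppose that for every one-state controller C (with state set {0}, input alphabet X₂, output alphabet U₂) that is feedback composable with S₂, C is also feedback composable with Q ∘ S₁ (the system S₁ with output map x ↦ Q(x)). Then F₁(x₁,u) ≠ ∅. Here feedback composability of C with S₂ requires that whenever the controller output u' is produced at controller state x_c in response to measured state x₂' and F₂(x₂',u') = ∅, the controller blocks, i.e., F_c(x_c, v) = ∅ for the corresponding internal variable v; composability with Q∘S₁ imposes the analogous condition with F₁ at any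 x₁' ∈ Q⁻¹(x₂'). -/
structure Sys (Uin V X Y : Type) where
  init : Set X
  F : X → V → Set X
  H : X → Uin → Set (Y × V)

def Moore {Uin V X Y : Type} (S : Sys Uin V X Y) : Prop :=
  ∀ x u y v, (y, v) ∈ S.H x u → ∀ u', ∃ v', (y, v') ∈ S.H x u'

/-- `S₁` is feedback composable with `S₂`. -/
def FC {V₁ X₁ Y₁ V₂ X₂ Y₂ : Type}
    (S₁ : Sys Y₂ V₁ X₁ Y₁) (S₂ : Sys Y₁ V₂ X₂ Y₂) : Prop :=
  Moore S₂ ∧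
  ∀ x₁ x₂ y₁ y₂ v₁ v₂, (y₂, v₂) ∈ S₂.H x₂ y₁ → (y₁, v₁) ∈ S₁.H x₁ y₂ →
    S₂.F x₂ v₂ = ∅ → S₁.F x₁ v₁ = ∅

/-- The simple system with transition `F`. -/
def simpleSys {X U : Type} (F : X → U → Set X) : Sys U U X X :=
  ⟨Set.univ, F, fun x u => {(x, u)}⟩

/-- `Q ∘ S₁`: the simple system `S₁` with output map `x ↦ Q(x) × {u}`. -/
def quantized {X₁ X₂ U : Type} (Q : X₁ → X₂ → Prop) (F₁ : X₁ → U → Set X₁) :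
    Sys U U X₁ X₂ :=
  ⟨Set.univ, F₁, fun x u => {p | Q x p.1 ∧ p.2 = u}⟩

/-- necessity of condition (i) of feedback refinement relations via
blocking.  Fix `(x₁,x₂) ∈ Q` and `u` with `F₂(x₂,u) ≠ ∅`.  If every one-state
controller (state set `Unit`, input alphabet `X₂`, output alphabet `U`) that is
feedback composable with `S₂` is also feedback composable with `Q ∘ S₁`, then
`F₁(x₁,u) ≠ ∅`. -/
theorem frr_necessity_blocking {X₁ X₂ U : Type}
    (F₁ : X₁ → U → Set X₁) (F₂ : X₂ → U → Set X₂) (Q : X₁ → X₂ → Prop)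
    (hstrict : ∀ x₁, ∃ x₂, Q x₁ x₂)
    (x₁ : X₁) (x₂ : X₂) (hx : Q x₁ x₂) (u : U) (hne : (F₂ x₂ u).Nonempty)
    (hcomp : ∀ (Vc : Type) (C : Sys X₂ Vc Unit U),
      FC C (simpleSys F₂) → FC C (quantized Q F₁)) :
    (F₁ x₁ u).Nonempty := by
  set C : Sys X₂ X₂ Unit U :=
    ⟨Set.univ, fun _ v => {c | (F₂ v u).Nonempty}, fun _ y => {(u, y)}⟩ with hC
  have hFC : FC C (simpleSys F₂) := by
    constructor
    · intro x u y v hy u'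
      exact ⟨u', by simp_all [simpleSys, Moore]⟩
    · intro xc xp y₁ y₂ v₁ v₂ h2 h1 hF
      simp only [hC, simpleSys, Set.mem_singleton_iff, Prod.mk.injEq] at h1 h2
      obtain ⟨rfl, rfl⟩ := h2
      obtain ⟨rfl, rfl⟩ := h1
      simp only [simpleSys] at hF
      ext c
      simp [hC, Set.not_nonempty_iff_eq_empty.2 hF]
  have hQ := (hcomp X₂ C hFC).2 () x₁ u x₂ x₂ u
    (by simp [quantized, hx]) (by simp [hC])
  by_contra h
  have := hQ (Set.not_nonempty_iff_eq_empty.1 h)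
  have : () ∈ (C.F () x₂) := hne
  simp_all
end
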